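/- Let Δ⁺ ⊂ ℝ² be the triangle with vertices (0,0), (6,0), (3, 3√3), let the density be μ(p) = ∏_{α ∈ Φ⁺} ⟨α, p⟩ where Φ⁺ = {(1,0)', (1/2, √3/2)', (3/2, √3/2)'} appropriately normalized so that μ(x,y) = y·(√3 x - y)·(√3 x + y) up to a positive constant. Then the barycenter of Δ⁺ with respect to μ(p) dp lies in the interior of the translated cone 2ρ + C, where 2ρ = (3, √3) and C is the cone generated by (3/2, √3/2) and (3/2, -√3/2) and (0,√3). -/

import Mathlib

open MeasureTheory

/-- The moment polytope of the variety of complete conics: the triangle with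
vertices (0,0), (6,0), (3, 3√3). -/
noncomputable def delta4 : Set (ℝ × ℝ) :=
  convexHull ℝ {((0:ℝ), (0:ℝ)), ((6:ℝ), (0:ℝ)), ((3:ℝ), 3 * Real.sqrt 3)}

/-- The Duistermaat–Heckman density `μ(x,y) = y (√3 x - y)(√3 x + y) = y (3x² - y²)`,
the product of the pairings with the three positive roots. -/
noncomputable def mu4 (p : ℝ × ℝ) : ℝ := p.2 * (3 * p.1 ^ 2 - p.2 ^ 2)

/-- The barycenter of `delta4` with respect to the measure `mu4 dp`. -/
noncomputable def bar4 : ℝ × ℝ :=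
  ((∫ p in delta4, p.1 * mu4 p) / (∫ p in delta4, mu4 p),
   (∫ p in delta4, p.2 * mu4 p) / (∫ p in delta4, mu4 p))

/-- The cone generated by (3/2, √3/2), (3/2, -√3/2) and (0, √3). -/
noncomputable def cone4 : Set (ℝ × ℝ) :=
  {v | ∃ a b c : ℝ, 0 ≤ a ∧ 0 ≤ b ∧ 0 ≤ c ∧
    v = a • (((3:ℝ)/2, Real.sqrt 3 / 2) : ℝ × ℝ)
      + b • (((3:ℝ)/2, -(Real.sqrt 3 / 2)) : ℝ × ℝ)
      + c • (((0:ℝ), Real.sqrt 3) : ℝ × ℝ)}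

lemma sq3 : Real.sqrt 3 * Real.sqrt 3 = 3 := Real.mul_self_sqrt (by norm_num)
lemma sqrt3_pos : (0:ℝ) < Real.sqrt 3 := Real.sqrt_pos.2 (by norm_num)

noncomputable def g4 (x : ℝ) : ℝ := Real.sqrt 3 * min x (6 - x)

lemma delta4_eq : delta4 =
    {p : ℝ × ℝ | 0 ≤ p.2 ∧ p.2 ≤ Real.sqrt 3 * p.1 ∧ p.2 ≤ Real.sqrt 3 * (6 - p.1)} := by
  have s3 := sq3
  have s3p := sqrt3_pos
  apply le_antisymm
  · apply convexHull_min
    · intro p hp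
      rcases hp with h | h | h <;> subst h <;>
        refine ⟨?_, ?_, ?_⟩ <;> simp <;> nlinarith
    · intro p hp q hq a b ha hb hab
      obtain ⟨hp1, hp2, hp3⟩ := hp
      obtain ⟨hq1, hq2, hq3⟩ := hq
      refine ⟨?_, ?_, ?_⟩ <;> simp [Prod.add_def, Prod.smul_def, smul_eq_mul] <;> nlinarith
  · rintro ⟨x, y⟩ ⟨h1, h2, h3⟩
    simp only at h1 h2 h3
    set s := Real.sqrt 3 with hs
    have hsq : s ^ 2 = 3 := by rw [sq]; exact s3
    have key : (x, y) = Finset.centerMass Finset.univ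
        ![1 - x/6 - y*s/18, x/6 - y*s/18, y*s/9]
        ![((0:ℝ),(0:ℝ)), ((6:ℝ),(0:ℝ)), ((3:ℝ), 3*s)] := by
      rw [Finset.centerMass]
      norm_num [Fin.sum_univ_three, Prod.smul_def, smul_eq_mul, Prod.ext_iff]
      simp only [Matrix.cons_val_two, Matrix.tail_cons, Matrix.head_cons]
      rw [show (1 - x/6 - y*s/18 + (x/6 - y*s/18) + y*s/9) = 1 from by ring]
      refine ⟨by ring, ?_⟩
      rw [inv_one, one_mul]
      linear_combination (-y/3) * s3
    rw [key]
    apply Finset.centerMass_mem_convexHull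
    · intro i hi
      fin_cases i <;> simp <;> nlinarith
    · have h : (1 - x/6 - y*s/18) + (x/6 - y*s/18) + y*s/9 = 1 := by ring
      rw [Fin.sum_univ_three]; simp only [Matrix.cons_val_zero, Matrix.cons_val_one,
        Matrix.head_cons, Matrix.cons_val_two, Matrix.tail_cons]
      linarith
    · intro i hi
      fin_cases i <;> simp [hs]

lemma delta4_compact : IsCompact delta4 :=
  (Set.toFinite _).isCompact_convexHull ℝ

lemma delta4_meas : MeasurableSet delta4 :=
  delta4_compact.isClosed.measurableSet

lemma section_eq (x : ℝ) :
    {y : ℝ | (x, y) ∈ delta4} = Set.Icc 0 (g4 x) := by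
  ext y
  simp only [delta4_eq, Set.mem_setOf_eq, Set.mem_Icc, g4]
  have s3p := sqrt3_pos
  have hmin : Real.sqrt 3 * min x (6 - x)
      = min (Real.sqrt 3 * x) (Real.sqrt 3 * (6 - x)) :=
    mul_min_of_nonneg _ _ s3p.le
  rw [hmin, le_min_iff]

lemma slice4 (F : ℝ × ℝ → ℝ) (hF : Continuous F) :
    ∫ p in delta4, F p = ∫ x in (0:ℝ)..6, ∫ y in (0:ℝ)..(g4 x), F (x, y) := by
  have hmeas := delta4_meas
  have hint : IntegrableOn F delta4 := hF.continuousOn.integrableOn_compact delta4_compact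
  have hind : Integrable (delta4.indicator F) := by
    rwa [integrable_indicator_iff hmeas]
  rw [← integral_indicator hmeas]
  rw [show (volume : Measure (ℝ × ℝ)) = (volume : Measure ℝ).prod volume from Measure.volume_eq_prod ℝ ℝ]
  rw [MeasureTheory.integral_prod _ (by rwa [← Measure.volume_eq_prod])]
  have hsec : ∀ x : ℝ, (fun y => delta4.indicator F (x, y))
      = (Set.Icc 0 (g4 x)).indicator (fun y => F (x, y)) := by
    intro x
    funext y
    by_cases h : (x, y) ∈ delta4
    · rw [Set.indicator_of_mem h, Set.indicator_of_mem (by rw [← section_eq x]; exact h)]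
    · rw [Set.indicator_of_notMem h, Set.indicator_of_notMem (by rw [← section_eq x]; exact h)]
  have step1 : (fun x => ∫ y, delta4.indicator F (x, y))
      = (Set.Icc (0:ℝ) 6).indicator (fun x => ∫ y in (0:ℝ)..(g4 x), F (x, y)) := by
    funext x
    rw [hsec x, integral_indicator measurableSet_Icc]
    by_cases hx : x ∈ Set.Icc (0:ℝ) 6
    · rw [Set.indicator_of_mem hx]
      have hg : 0 ≤ g4 x := by
        have h1 : (0:ℝ) ≤ min x (6 - x) := le_min (hx.1) (by linarith [hx.2])
        exact mul_nonneg sqrt3_pos.le h1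
      rw [intervalIntegral.integral_of_le hg, ← integral_Icc_eq_integral_Ioc]
    · rw [Set.indicator_of_notMem hx]
      have hg : g4 x < 0 := by
        have s3p := sqrt3_pos
        simp only [Set.mem_Icc, not_and_or, not_le] at hx
        rcases hx with hx | hx
        · have : min x (6-x) ≤ x := min_le_left _ _
          have : min x (6-x) < 0 := by linarith
          unfold g4; nlinarith
        · have : min x (6-x) ≤ 6 - x := min_le_right _ _
          have : min x (6-x) < 0 := by linarith
          unfold g4; nlinarith
      rw [Set.Icc_eq_empty (by linarith), Measure.restrict_empty, integral_zero_measure]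
  rw [step1, integral_indicator measurableSet_Icc, integral_Icc_eq_integral_Ioc,
    ← intervalIntegral.integral_of_le (by norm_num : (0:ℝ) ≤ 6)]

lemma g4_sq (x : ℝ) : (g4 x)^2 = 3 * (min x (6-x))^2 := by
  unfold g4; rw [mul_pow, sq, sq3]
lemma g4_pow4 (x : ℝ) : (g4 x)^4 = 9 * (min x (6-x))^4 := by
  have := g4_sq x; nlinarith [this]
lemma g4_cube (x : ℝ) : (g4 x)^3 = 3 * Real.sqrt 3 * (min x (6-x))^3 := by
  unfold g4; rw [mul_pow,
    show (Real.sqrt 3)^3 = (Real.sqrt 3 * Real.sqrt 3) * Real.sqrt 3 by ring, sq3]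
lemma g4_pow5 (x : ℝ) : (g4 x)^5 = 9 * Real.sqrt 3 * (min x (6-x))^5 := by
  unfold g4; rw [mul_pow]
  rw [show (Real.sqrt 3)^5 = (Real.sqrt 3 * Real.sqrt 3)^2 * Real.sqrt 3 by ring]
  rw [sq3]; ring

private lemma hda {f : ℝ → ℝ} {d d' x : ℝ} (h : HasDerivAt f d x) (hd : d = d') :
    HasDerivAt f d' x := hd ▸ h

lemma poly_int (a b : ℝ) (c1 c2 c3 c4 c5 c6 : ℝ) :
    ∫ x in a..b, (c1 + c2*x + c3*x^2 + c4*x^3 + c5*x^4 + c6*x^5) =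
      (c1*b + c2/2*b^2 + c3/3*b^3 + c4/4*b^4 + c5/5*b^5 + c6/6*b^6)
      - (c1*a + c2/2*a^2 + c3/3*a^3 + c4/4*a^4 + c5/5*a^5 + c6/6*a^6) := by
  apply intervalIntegral.integral_eq_sub_of_hasDerivAt
    (f := fun x => c1*x + c2/2*x^2 + c3/3*x^3 + c4/4*x^4 + c5/5*x^5 + c6/6*x^6)
  · intro x _
    have h :=
      ((((((hasDerivAt_pow 1 x).const_mul c1).add ((hasDerivAt_pow 2 x).const_mul (c2/2))).add
        ((hasDerivAt_pow 3 x).const_mul (c3/3))).add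
        ((hasDerivAt_pow 4 x).const_mul (c4/4))).add
        ((hasDerivAt_pow 5 x).const_mul (c5/5))).add
        ((hasDerivAt_pow 6 x).const_mul (c6/6))
    have h2 : HasDerivAt (fun x => c1*x + c2/2*x^2 + c3/3*x^3 + c4/4*x^4 + c5/5*x^5 + c6/6*x^6)
        (c1 * (1 * x ^ 0) + c2/2 * (2 * x ^ 1) + c3/3 * (3 * x ^ 2) + c4/4 * (4 * x ^ 3)
          + c5/5 * (5 * x ^ 4) + c6/6 * (6 * x ^ 5)) x := by
      simpa [pow_one, Pi.add_def] using h
    exact hda h2 (by ring)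
  · apply Continuous.intervalIntegrable; continuity

lemma poly_int' (a b c1 c2 c3 c4 c5 c6 : ℝ) (f : ℝ → ℝ)
    (hf : ∀ x, f x = c1 + c2*x + c3*x^2 + c4*x^3 + c5*x^4 + c6*x^5) :
    ∫ x in a..b, f x =
      (c1*b + c2/2*b^2 + c3/3*b^3 + c4/4*b^4 + c5/5*b^5 + c6/6*b^6)
      - (c1*a + c2/2*a^2 + c3/3*a^3 + c4/4*a^4 + c5/5*a^5 + c6/6*a^6) := by
  rw [show f = fun x => c1 + c2*x + c3*x^2 + c4*x^3 + c5*x^4 + c6*x^5 from funext hf]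
  exact poly_int a b c1 c2 c3 c4 c5 c6

lemma min_left : ∀ x ∈ Set.uIcc (0:ℝ) 3, min x (6-x) = x := by
  intro x hx
  rw [Set.uIcc_of_le (by norm_num)] at hx
  exact min_eq_left (by linarith [hx.2])

lemma min_right : ∀ x ∈ Set.uIcc (3:ℝ) 6, min x (6-x) = 6 - x := by
  intro x hx
  rw [Set.uIcc_of_le (by norm_num)] at hx
  exact min_eq_right (by linarith [hx.1])

lemma mu4_cont : Continuous mu4 := by unfold mu4; fun_prop

lemma hcont0 : Continuous fun x : ℝ => 9/2*x^2*(min x (6-x))^2 - 9/4*(min x (6-x))^4 := by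
  fun_prop

lemma I0 : ∫ p in delta4, mu4 p = 2916/5 := by
  rw [slice4 _ mu4_cont]
  have inner : ∀ x : ℝ, (∫ y in (0:ℝ)..(g4 x), mu4 (x, y))
      = 9/2*x^2*(min x (6-x))^2 - 9/4*(min x (6-x))^4 := by
    intro x
    rw [poly_int' 0 (g4 x) 0 (3*x^2) 0 (-1) 0 0 (fun y => mu4 (x,y))
      (fun y => by simp [mu4]; ring)]
    rw [show (g4 x)^4 = ((g4 x)^2)^2 by ring, g4_sq]
    ring
  rw [intervalIntegral.integral_congr (g := fun x =>
      9/2*x^2*(min x (6-x))^2 - 9/4*(min x (6-x))^4) (fun x _ => inner x)]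
  rw [← intervalIntegral.integral_add_adjacent_intervals (a := (0:ℝ)) (b := 3) (c := 6)
    (hcont0.intervalIntegrable 0 3) (hcont0.intervalIntegrable 3 6)]
  have p1 : (∫ x in (0:ℝ)..3, (9/2*x^2*(min x (6-x))^2 - 9/4*(min x (6-x))^4)) = 2187/20 := by
    rw [intervalIntegral.integral_congr (g := fun x =>
        (0:ℝ) + 0*x + 0*x^2 + 0*x^3 + 9/4*x^4 + 0*x^5)
      (fun x hx => by rw [min_left x hx]; ring)]
    rw [poly_int]; norm_num
  have p2 : (∫ x in (3:ℝ)..6, (9/2*x^2*(min x (6-x))^2 - 9/4*(min x (6-x))^4)) = 9477/20 := by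
    rw [intervalIntegral.integral_congr (g := fun x =>
        (-2916:ℝ) + 1944*x + (-324)*x^2 + 0*x^3 + 9/4*x^4 + 0*x^5)
      (fun x hx => by rw [min_right x hx]; ring)]
    rw [poly_int]; norm_num
  rw [p1, p2]; norm_num

lemma hcontx : Continuous fun x : ℝ => 9/2*x^3*(min x (6-x))^2 - 9/4*x*(min x (6-x))^4 := by
  fun_prop

lemma Ix : ∫ p in delta4, p.1 * mu4 p = 2187 := by
  rw [slice4 _ (by unfold mu4; fun_prop)]
  have inner : ∀ x : ℝ, (∫ y in (0:ℝ)..(g4 x), (x, y).1 * mu4 (x, y))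
      = 9/2*x^3*(min x (6-x))^2 - 9/4*x*(min x (6-x))^4 := by
    intro x
    rw [poly_int' 0 (g4 x) 0 (3*x^3) 0 (-x) 0 0 (fun y => (x, y).1 * mu4 (x,y))
      (fun y => by simp [mu4]; ring)]
    rw [show (g4 x)^4 = ((g4 x)^2)^2 by ring, g4_sq]
    ring
  rw [intervalIntegral.integral_congr (g := fun x =>
      9/2*x^3*(min x (6-x))^2 - 9/4*x*(min x (6-x))^4) (fun x _ => inner x)]
  rw [← intervalIntegral.integral_add_adjacent_intervals (a := (0:ℝ)) (b := 3) (c := 6)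
    (hcontx.intervalIntegrable 0 3) (hcontx.intervalIntegrable 3 6)]
  have p1 : (∫ x in (0:ℝ)..3, (9/2*x^3*(min x (6-x))^2 - 9/4*x*(min x (6-x))^4)) = 2187/8 := by
    rw [intervalIntegral.integral_congr (g := fun x =>
        (0:ℝ) + 0*x + 0*x^2 + 0*x^3 + 0*x^4 + 9/4*x^5)
      (fun x hx => by rw [min_left x hx]; ring)]
    rw [poly_int]; norm_num
  have p2 : (∫ x in (3:ℝ)..6, (9/2*x^3*(min x (6-x))^2 - 9/4*x*(min x (6-x))^4)) = 15309/8 := by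
    rw [intervalIntegral.integral_congr (g := fun x =>
        (0:ℝ) + (-2916)*x + 1944*x^2 + (-324)*x^3 + 0*x^4 + 9/4*x^5)
      (fun x hx => by rw [min_right x hx]; ring)]
    rw [poly_int]; norm_num
  rw [p1, p2]; norm_num

lemma hconty : Continuous fun x : ℝ => 3*x^2*(min x (6-x))^3 - 9/5*(min x (6-x))^5 := by
  fun_prop

lemma Iy : ∫ p in delta4, p.2 * mu4 p = 729 * Real.sqrt 3 := by
  rw [slice4 _ (by unfold mu4; fun_prop)]
  have inner : ∀ x : ℝ, (∫ y in (0:ℝ)..(g4 x), (x, y).2 * mu4 (x, y))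
      = Real.sqrt 3 * (3*x^2*(min x (6-x))^3 - 9/5*(min x (6-x))^5) := by
    intro x
    rw [poly_int' 0 (g4 x) 0 0 (3*x^2) 0 (-1) 0 (fun y => (x, y).2 * mu4 (x,y))
      (fun y => by simp [mu4]; ring)]
    rw [g4_cube, g4_pow5]
    ring
  rw [intervalIntegral.integral_congr (g := fun x =>
      Real.sqrt 3 * (3*x^2*(min x (6-x))^3 - 9/5*(min x (6-x))^5)) (fun x _ => inner x)]
  rw [intervalIntegral.integral_const_mul]
  rw [← intervalIntegral.integral_add_adjacent_intervals (a := (0:ℝ)) (b := 3) (c := 6)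
    (hconty.intervalIntegrable 0 3) (hconty.intervalIntegrable 3 6)]
  have p1 : (∫ x in (0:ℝ)..3, (3*x^2*(min x (6-x))^3 - 9/5*(min x (6-x))^5)) = 729/5 := by
    rw [intervalIntegral.integral_congr (g := fun x =>
        (0:ℝ) + 0*x + 0*x^2 + 0*x^3 + 0*x^4 + 6/5*x^5)
      (fun x hx => by rw [min_left x hx]; ring)]
    rw [poly_int]; norm_num
  have p2 : (∫ x in (3:ℝ)..6, (3*x^2*(min x (6-x))^3 - 9/5*(min x (6-x))^5)) = 2916/5 := by
    rw [intervalIntegral.integral_congr (g := fun x =>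
        (-69984/5:ℝ) + 11664*x + (-3240)*x^2 + 324*x^3 + 0*x^4 + (-6/5)*x^5)
      (fun x hx => by rw [min_right x hx]; ring)]
    rw [poly_int]; norm_num
  rw [p1, p2]; ring

lemma bar4_eq : bar4 = (15/4, 5/4 * Real.sqrt 3) := by
  unfold bar4
  rw [I0, Ix, Iy, Prod.ext_iff]
  constructor
  · norm_num
  · rw [div_eq_iff (by norm_num : (2916:ℝ)/5 ≠ 0)]; ring

/-- The barycenter of the moment polytope of the variety of complete conics lies in
the interior of the translated cone `2ρ + C`, where `2ρ = (3, √3)`. -/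
theorem stmt4 :
    bar4 ∈ (fun v => (((3:ℝ), Real.sqrt 3) : ℝ × ℝ) + v) '' interior cone4 := by
  have s3 := sq3
  refine ⟨((3:ℝ)/4, Real.sqrt 3 / 4), ?_, ?_⟩
  · have hsub : {v : ℝ × ℝ | 0 < v.1 ∧ 0 < v.1 + Real.sqrt 3 * v.2} ⊆ cone4 := by
      rintro ⟨x, y⟩ ⟨h1, h2⟩
      refine ⟨0, 2*x/3, (x + Real.sqrt 3 * y)/3, le_refl 0, by positivity, by positivity, ?_⟩
      simp only [Prod.smul_def, smul_eq_mul, Prod.mk_add_mk, Prod.ext_iff]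
      constructor
      · ring
      · field_simp
        linear_combination (-2*y)*s3
    have hopen : IsOpen {v : ℝ × ℝ | 0 < v.1 ∧ 0 < v.1 + Real.sqrt 3 * v.2} :=
      (isOpen_lt continuous_const continuous_fst).inter
        (isOpen_lt continuous_const (continuous_fst.add (continuous_const.mul continuous_snd)))
    apply interior_maximal hsub hopen
    constructor
    · norm_num
    · simp only
      nlinarith [s3, sqrt3_pos]
  · rw [bar4_eq, Prod.ext_iff]
    constructor
    · norm_num
    · simp only [Prod.snd_add]
      ring
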